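/- arXiv:2604.24056 — 3 statements merged into one kernel-verified Lean document; each statement's English description precedes it below -/
import Mathlib

section
/- Let (Ω, F, μ) be a probability space and let W₁, W₂ be real-valued random variables on Ω that are nonnegative μ-almost everywhere and exchangeable. Fix a real number γ with 0 < γ ≤ 1 and set M = W₁ − γ·W₂. Assume the distribution of M is continuous, i.e., μ{ω : M(ω) = t} = 0 for every t ∈ ℝ. Then for every s ≥ 0: μ{ω : M(ω) > s} = μ{ω : M(ω) < −s} + μ{ω : s ≤ M(ω) and M(ω) ≤ s/γ + (1/γ − γ)·W₂(ω)}. -/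
open MeasureTheory

/-- Two real random variables are exchangeable if the joint law of `(W₁, W₂)`
equals the joint law of `(W₂, W₁)`. -/
def Exchangeable {Ω : Type*} [MeasurableSpace Ω] (μ : Measure Ω) (W₁ W₂ : Ω → ℝ) : Prop :=
  Measure.map (fun ω => (W₁ ω, W₂ ω)) μ = Measure.map (fun ω => (W₂ ω, W₁ ω)) μ

/-- Proposition 2 of the paper (bi-Gaussian mirror tail identity). -/
theorem stmt_0 {Ω : Type*} [MeasurableSpace Ω] (μ : Measure Ω) [IsProbabilityMeasure μ]
    (W₁ W₂ : Ω → ℝ) (hW₁ : Measurable W₁) (hW₂ : Measurable W₂)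
    (hW₁pos : ∀ᵐ ω ∂μ, 0 ≤ W₁ ω) (hW₂pos : ∀ᵐ ω ∂μ, 0 ≤ W₂ ω)
    (hexch : Exchangeable μ W₁ W₂)
    (γ : ℝ) (hγpos : 0 < γ) (hγle : γ ≤ 1)
    (M : Ω → ℝ) (hM : M = fun ω => W₁ ω - γ * W₂ ω)
    (hcont : ∀ t : ℝ, μ {ω | M ω = t} = 0) :
    ∀ s : ℝ, 0 ≤ s →
      μ {ω | M ω > s} =
        μ {ω | M ω < -s} +
          μ {ω | s ≤ M ω ∧ M ω ≤ s / γ + (1 / γ - γ) * W₂ ω} := by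
  intro s hs
  have hMmeas : Measurable M := by
    rw [hM]; exact hW₁.sub (measurable_const.mul hW₂)
  have hfmeas : Measurable (fun ω => γ * W₁ ω - W₂ ω) :=
    (measurable_const.mul hW₁).sub hW₂
  have hγne : γ ≠ 0 := hγpos.ne'
  -- rewrite the second set
  have hset2 : {ω | s ≤ M ω ∧ M ω ≤ s / γ + (1 / γ - γ) * W₂ ω}
      = {ω | s ≤ M ω ∧ γ * W₁ ω - W₂ ω ≤ s} := by
    ext ω
    simp only [Set.mem_setOf_eq, hM]
    constructor <;> rintro ⟨h1, h2⟩ <;> refine ⟨h1, ?_⟩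
    · have h2' := mul_le_mul_of_nonneg_left h2 hγpos.le
      rw [mul_add, mul_div_cancel₀ _ hγne] at h2'
      have key : γ * ((1 / γ - γ) * W₂ ω) = W₂ ω - γ ^ 2 * W₂ ω := by
        field_simp
      nlinarith
    · have h2' : 0 ≤ (s - (γ * W₁ ω - W₂ ω)) / γ :=
        div_nonneg (by linarith) hγpos.le
      have heq : s / γ + (1 / γ - γ) * W₂ ω - (W₁ ω - γ * W₂ ω)
          = (s - (γ * W₁ ω - W₂ ω)) / γ := by
        field_simp; ring
      linarith
  rw [hset2]
  -- split {M > s}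
  have hTmeas : MeasurableSet {ω | γ * W₁ ω - W₂ ω ≤ s} :=
    measurableSet_le hfmeas measurable_const
  have hsplit : μ ({ω | M ω > s} ∩ {ω | γ * W₁ ω - W₂ ω ≤ s})
      + μ ({ω | M ω > s} \ {ω | γ * W₁ ω - W₂ ω ≤ s}) = μ {ω | M ω > s} :=
    measure_inter_add_diff _ hTmeas
  -- piece 1: equals second RHS set up to null set {M = s}
  have hMne : ∀ᵐ ω ∂μ, M ω ≠ s := by
    rw [ae_iff]
    simpa using hcont s
  have hp1 : μ ({ω | M ω > s} ∩ {ω | γ * W₁ ω - W₂ ω ≤ s})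
      = μ {ω | s ≤ M ω ∧ γ * W₁ ω - W₂ ω ≤ s} := by
    apply measure_congr
    rw [Filter.eventuallyEq_set]
    filter_upwards [hMne] with ω hω
    simp only [Set.mem_inter_iff, Set.mem_setOf_eq]
    constructor
    · rintro ⟨h1, h2⟩; exact ⟨le_of_lt h1, h2⟩
    · rintro ⟨h1, h2⟩; exact ⟨lt_of_le_of_ne h1 (Ne.symm hω), h2⟩
  -- piece 2: equals {γW₁ - W₂ > s} a.e.
  have hp2 : μ ({ω | M ω > s} \ {ω | γ * W₁ ω - W₂ ω ≤ s})
      = μ {ω | γ * W₁ ω - W₂ ω > s} := by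
    apply measure_congr
    rw [Filter.eventuallyEq_set]
    filter_upwards [hW₂pos] with ω hω
    simp only [Set.mem_diff, Set.mem_setOf_eq, not_le, hM]
    constructor
    · rintro ⟨_, h2⟩; exact h2
    · intro h2
      refine ⟨?_, h2⟩
      nlinarith [mul_nonneg (sub_nonneg.2 hγle) hω, mul_nonneg (sub_nonneg.2 hγle) hs,
        mul_nonneg (mul_nonneg hγpos.le (sub_nonneg.2 hγle)) hω]
  -- exchangeability: μ{γW₁ - W₂ > s} = μ{M < -s}
  have hexch' : μ {ω | γ * W₁ ω - W₂ ω > s} = μ {ω | M ω < -s} := by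
    have hme : MeasurableSet {p : ℝ × ℝ | p.1 - γ * p.2 < -s} :=
      measurableSet_lt (measurable_fst.sub (measurable_const.mul measurable_snd))
        measurable_const
    have h1 : μ {ω | M ω < -s}
        = Measure.map (fun ω => (W₁ ω, W₂ ω)) μ {p | p.1 - γ * p.2 < -s} := by
      rw [Measure.map_apply (hW₁.prodMk hW₂) hme, hM]; rfl
    have h2 : Measure.map (fun ω => (W₂ ω, W₁ ω)) μ {p | p.1 - γ * p.2 < -s}
        = μ {ω | W₂ ω - γ * W₁ ω < -s} := by
      rw [Measure.map_apply (hW₂.prodMk hW₁) hme]; rfl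
    have h3 : {ω | W₂ ω - γ * W₁ ω < -s} = {ω | γ * W₁ ω - W₂ ω > s} := by
      ext ω; simp only [Set.mem_setOf_eq, gt_iff_lt]; constructor <;> intro h <;> linarith
    rw [h1, hexch, h2, h3]
  rw [← hsplit, hp1, hp2, hexch', add_comm]
end

section
/- Let (Ω, F, μ) be a probability space and let W₁, W₂ be real-valued random variables on Ω that are nonnegative μ-almost everywhere and exchangeable. Fix a real number γ with 0 < γ ≤ 1 and set M = W₁ − γ·W₂. Then for every s ≥ 0: μ{ω : M(ω) < −s} ≤ μ{ω : M(ω) > s}. -/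
open MeasureTheory

/-- One-sided tail inequality for the bi-Gaussian mirror statistic: the lower tail
never exceeds the upper tail. -/
theorem stmt_3 {Ω : Type*} [MeasurableSpace Ω] (μ : Measure Ω) [IsProbabilityMeasure μ]
    (W₁ W₂ : Ω → ℝ) (hW₁ : Measurable W₁) (hW₂ : Measurable W₂)
    (hW₁pos : ∀ᵐ ω ∂μ, 0 ≤ W₁ ω) (hW₂pos : ∀ᵐ ω ∂μ, 0 ≤ W₂ ω)
    (hexch : Exchangeable μ W₁ W₂)
    (γ : ℝ) (hγpos : 0 < γ) (hγle : γ ≤ 1)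
    (M : Ω → ℝ) (hM : M = fun ω => W₁ ω - γ * W₂ ω) :
    ∀ s : ℝ, 0 ≤ s → μ {ω | M ω < -s} ≤ μ {ω | M ω > s} := by
  subst hM
  intro s hs
  have h1 : μ {ω | W₁ ω - γ * W₂ ω < -s} ≤ μ {ω | W₂ ω - γ * W₁ ω > s} := by
    apply measure_mono_ae
    filter_upwards [hW₁pos, hW₂pos] with ω h1 h2 hmem
    replace hmem : W₁ ω - γ * W₂ ω < -s := hmem
    show W₂ ω - γ * W₁ ω > s
    nlinarith [mul_nonneg (sub_nonneg.mpr hγle) h1, mul_nonneg (sub_nonneg.mpr hγle) h2]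
  have hS : MeasurableSet {p : ℝ × ℝ | p.1 - γ * p.2 > s} := by
    apply measurableSet_lt measurable_const
    exact measurable_fst.sub (measurable_const.mul measurable_snd)
  have h2 : μ {ω | W₂ ω - γ * W₁ ω > s} = μ {ω | W₁ ω - γ * W₂ ω > s} := by
    have e1 : {ω | W₂ ω - γ * W₁ ω > s} =
        (fun ω => (W₂ ω, W₁ ω)) ⁻¹' {p : ℝ × ℝ | p.1 - γ * p.2 > s} := rfl
    have e2 : {ω | W₁ ω - γ * W₂ ω > s} =
        (fun ω => (W₁ ω, W₂ ω)) ⁻¹' {p : ℝ × ℝ | p.1 - γ * p.2 > s} := rfl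
    rw [e1, e2, ← Measure.map_apply (hW₂.prodMk hW₁) hS,
      ← Measure.map_apply (hW₁.prodMk hW₂) hS, hexch]
  calc μ {ω | W₁ ω - γ * W₂ ω < -s} ≤ μ {ω | W₂ ω - γ * W₁ ω > s} := h1
    _ = μ {ω | W₁ ω - γ * W₂ ω > s} := h2
end

section
/- Let (Ω, F, μ) be a probability space and let W₁, W₂ be real-valued random variables on Ω that are nonnegative μ-almost everywhere and exchangeable. Fix a real number γ with 0 < γ ≤ 1, set M = W₁ − γ·W₂, and assume μ{ω : M(ω) = t} = 0 for every t ∈ ℝ. Then for every s ≥ 0: μ{ω : M(ω) < −s} + μ{ω : s ≤ M(ω) < s/γ} ≤ μ{ω : M(ω) > s}. -/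
open MeasureTheory

/-- Lower bound justifying the self-guiding BGM cutoff rule: the observable
quantity does not underestimate the upper-tail probability. -/
theorem stmt_17 {Ω : Type*} [MeasurableSpace Ω] (μ : Measure Ω) [IsProbabilityMeasure μ]
    (W₁ W₂ : Ω → ℝ) (hW₁ : Measurable W₁) (hW₂ : Measurable W₂)
    (hW₁pos : ∀ᵐ ω ∂μ, 0 ≤ W₁ ω) (hW₂pos : ∀ᵐ ω ∂μ, 0 ≤ W₂ ω)
    (hexch : Exchangeable μ W₁ W₂)
    (γ : ℝ) (hγpos : 0 < γ) (hγle : γ ≤ 1)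
    (M : Ω → ℝ) (hM : M = fun ω => W₁ ω - γ * W₂ ω)
    (hcont : ∀ t : ℝ, μ {ω | M ω = t} = 0) :
    ∀ s : ℝ, 0 ≤ s →
      μ {ω | M ω < -s} + μ {ω | s ≤ M ω ∧ M ω < s / γ} ≤ μ {ω | M ω > s} := by
  intro s hs
  have hMmeas : Measurable M := by
    rw [hM]; exact hW₁.sub (measurable_const.mul hW₂)
  set M' : Ω → ℝ := fun ω => W₂ ω - γ * W₁ ω with hM'
  -- same law of M and M'
  have hlaw : ∀ t : ℝ, μ {ω | t < M' ω} = μ {ω | t < M ω} := by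
    intro t
    have hS : MeasurableSet {p : ℝ × ℝ | t < p.1 - γ * p.2} :=
      measurableSet_lt measurable_const (measurable_fst.sub (measurable_const.mul measurable_snd))
    have h1 : {ω | t < M' ω} = (fun ω => (W₂ ω, W₁ ω)) ⁻¹' {p : ℝ × ℝ | t < p.1 - γ * p.2} := rfl
    have h2 : {ω | t < M ω} = (fun ω => (W₁ ω, W₂ ω)) ⁻¹' {p : ℝ × ℝ | t < p.1 - γ * p.2} := by
      rw [hM]; rfl
    rw [h1, h2, ← Measure.map_apply (hW₂.prodMk hW₁) hS,
      ← Measure.map_apply (hW₁.prodMk hW₂) hS, hexch]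
  -- a.e., M < -s implies M' > s/γ
  have hae : μ {ω | M ω < -s} ≤ μ {ω | s / γ < M' ω} := by
    apply measure_mono_ae
    filter_upwards [hW₁pos, hW₂pos] with ω h1 h2 hmem
    simp only [Set.mem_setOf_eq, hM] at hmem
    have hmem' : W₁ ω - γ * W₂ ω < -s := hmem
    show s / γ < W₂ ω - γ * W₁ ω
    rw [div_lt_iff₀ hγpos]
    have hγ2 : γ * γ ≤ 1 := mul_le_one₀ hγle hγpos.le hγle
    nlinarith [mul_nonneg h1 (sub_nonneg.mpr hγ2)]
  -- remove boundary M = s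
  have hbd : μ {ω | s ≤ M ω ∧ M ω < s / γ} ≤ μ {ω | s < M ω ∧ M ω < s / γ} := by
    have hsub : {ω | s ≤ M ω ∧ M ω < s / γ} ⊆ {ω | s < M ω ∧ M ω < s / γ} ∪ {ω | M ω = s} := by
      intro ω ⟨h1, h2⟩
      rcases lt_or_eq_of_le h1 with h | h
      · exact Or.inl ⟨h, h2⟩
      · exact Or.inr h.symm
    calc μ {ω | s ≤ M ω ∧ M ω < s / γ}
        ≤ μ ({ω | s < M ω ∧ M ω < s / γ} ∪ {ω | M ω = s}) := measure_mono hsub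
      _ ≤ μ {ω | s < M ω ∧ M ω < s / γ} + μ {ω | M ω = s} := measure_union_le _ _
      _ = μ {ω | s < M ω ∧ M ω < s / γ} := by rw [hcont s, add_zero]
  calc μ {ω | M ω < -s} + μ {ω | s ≤ M ω ∧ M ω < s / γ}
      ≤ μ {ω | s / γ < M ω} + μ {ω | s < M ω ∧ M ω < s / γ} := by
        exact add_le_add (le_trans hae (le_of_eq (hlaw (s / γ)))) hbd
    _ = μ ({ω | s / γ < M ω} ∪ {ω | s < M ω ∧ M ω < s / γ}) := by
        exact (measure_union
          (Set.disjoint_left.mpr fun ω h1 (h2 : s < M ω ∧ M ω < s / γ) => absurd h1 (not_lt.mpr h2.2.le))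
          ((measurableSet_lt measurable_const hMmeas).inter
            (measurableSet_lt hMmeas measurable_const))).symm
    _ ≤ μ {ω | M ω > s} := by
        apply measure_mono
        rintro ω (h | h)
        · exact lt_of_le_of_lt (le_div_self hs hγpos hγle) h
        · exact h.1
end
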